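/- (Theorem 1, global convergence of the IAL framework) Suppose the nonnegative tolerance sequence {η_k} is summable, i.e., Σ_{k=1}^∞ η_k < +∞. Then δ_k := d(λ*) − d(λ^k) → 0 as k → ∞, and ‖Ax^{k+1} − b‖ → 0 as k → ∞. -/

import Mathlib

open RealInnerProductSpace Filter

lemma grad_ineq {n : ℕ} {f : EuclideanSpace ℝ (Fin n) → ℝ}
    (hf : ConvexOn ℝ Set.univ f) {x p : EuclideanSpace ℝ (Fin n)}
    (h : HasGradientAt f p x) (y : EuclideanSpace ℝ (Fin n)) :
    f x + ⟪p, y - x⟫ ≤ f y := by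
  rcases eq_or_ne y x with rfl | hxy
  · simp
  · set φ : ℝ → ℝ := f ∘ (AffineMap.lineMap x y) with hφ
    have hconv : ConvexOn ℝ Set.univ φ := by
      have := hf.comp_affineMap (AffineMap.lineMap x y)
      simpa [hφ] using this
    have hline : HasDerivAt (fun t : ℝ => AffineMap.lineMap x y t) (y - x) 0 := by
      have heq : (fun t : ℝ => AffineMap.lineMap x y t)
          = fun t : ℝ => t • (y - x) + x := by
        funext t
        simp [AffineMap.lineMap_apply_module, sub_smul, smul_sub]
        module
      rw [heq]
      have : HasDerivAt (fun t : ℝ => t • (y - x) + x) ((1:ℝ) • (y - x)) 0 :=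
        ((hasDerivAt_id (0:ℝ)).smul_const (y - x)).add_const x
      simpa using this
    have hderiv : HasDerivAt φ ⟪p, y - x⟫ 0 := by
      have h0 : (AffineMap.lineMap x y : ℝ → EuclideanSpace ℝ (Fin n)) 0 = x := by
        simp
      have hfd : HasFDerivAt f (InnerProductSpace.toDual ℝ _ p)
          ((AffineMap.lineMap x y : ℝ → EuclideanSpace ℝ (Fin n)) 0) := by
        rw [h0]; exact h
      have := hfd.comp_hasDerivAt 0 hline
      simpa [hφ, InnerProductSpace.toDual_apply_apply] using this
    have hslope := hconv.le_slope_of_hasDerivAt (Set.mem_univ (0:ℝ))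
      (Set.mem_univ (1:ℝ)) one_pos hderiv
    have h0 : φ 0 = f x := by simp [hφ]
    have h1 : φ 1 = f y := by simp [hφ]
    rw [slope_def_field, h0, h1] at hslope
    simp only [sub_zero, div_one] at hslope
    linarith

set_option maxHeartbeats 1000000
theorem ial_global_convergence
    {n m : ℕ}
    (A : EuclideanSpace ℝ (Fin n) →L[ℝ] EuclideanSpace ℝ (Fin m))
    (b : EuclideanSpace ℝ (Fin m))
    (f g : EuclideanSpace ℝ (Fin n) → ℝ)
    (f' : EuclideanSpace ℝ (Fin n) → EuclideanSpace ℝ (Fin n))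
    (hf : ConvexOn ℝ Set.univ f)
    (hf' : ∀ x, HasGradientAt f (f' x) x)
    (hg : ConvexOn ℝ Set.univ g)
    (β : ℝ) (hβ : 0 < β)
    (L : EuclideanSpace ℝ (Fin n) → EuclideanSpace ℝ (Fin m) → ℝ)
    (hL : ∀ x lam, L x lam
        = f x + ⟪lam, A x - b⟫ + β / 2 * ‖A x - b‖ ^ 2 + g x)
    (d : EuclideanSpace ℝ (Fin m) → ℝ)
    (hd : ∀ lam, IsLeast (Set.range fun x => L x lam) (d lam))
    (x : ℕ → EuclideanSpace ℝ (Fin n))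
    (lam : ℕ → EuclideanSpace ℝ (Fin m))
    (η : ℕ → ℝ)
    (hη : ∀ k, 1 ≤ k → 0 ≤ η k)
    (happrox : ∀ k, 1 ≤ k → ∀ y,
        ⟪f' (x (k + 1)) + A.adjoint (lam k + β • (A (x (k + 1)) - b)), x (k + 1) - y⟫
          + g (x (k + 1)) - g y ≤ η k)
    (hlam : ∀ k, 1 ≤ k → lam (k + 1) = lam k + β • (A (x (k + 1)) - b))
    (lamstar : EuclideanSpace ℝ (Fin m))
    (hstar : ∀ μ, d μ ≤ d lamstar)
    (hsum : Summable fun k : ℕ => η (k + 1)) :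
    Tendsto (fun k => d lamstar - d (lam k)) atTop (nhds 0)
      ∧ Tendsto (fun k => ‖A (x (k + 1)) - b‖) atTop (nhds 0) := by
  classical
  set r : ℕ → EuclideanSpace ℝ (Fin m) := fun k => A (x (k + 1)) - b with hr
  have hδ0 : ∀ k, 0 ≤ d lamstar - d (lam k) := fun k => sub_nonneg.mpr (hstar (lam k))
  have dle : ∀ μ y, d μ ≤ L y μ := fun μ y => (hd μ).2 ⟨y, rfl⟩
  -- key inequality for the subproblem
  have key : ∀ k, 1 ≤ k → ∀ y,
      L (x (k + 1)) (lam k) + β / 2 * ‖(A y - b) - r k‖ ^ 2 ≤ L y (lam k) + η k := by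
    intro k hk y
    have h1 : f (x (k + 1)) - f y ≤ ⟪f' (x (k + 1)), x (k + 1) - y⟫ := by
      have := grad_ineq hf (hf' (x (k + 1))) y
      have h2 : ⟪f' (x (k + 1)), x (k + 1) - y⟫ = -⟪f' (x (k + 1)), y - x (k + 1)⟫ := by
        rw [← inner_neg_right]; congr 1; abel
      linarith [this, h2.ge, h2.le]
    have hAxy : A (x (k + 1)) - A y = r k - (A y - b) := by rw [hr]; exact (sub_sub_sub_cancel_right _ _ _).symm
    have h2 : ⟪A.adjoint (lam k + β • r k), x (k + 1) - y⟫
        = (⟪lam k, r k⟫ - ⟪lam k, A y - b⟫) + β * (⟪r k, r k⟫ - ⟪r k, A y - b⟫) := by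
      rw [ContinuousLinearMap.adjoint_inner_left, map_sub, hAxy]
      simp only [inner_add_left, real_inner_smul_left, inner_sub_right]
      ring
    have h3 := happrox k hk y
    rw [inner_add_left, h2] at h3
    have h4 : ‖(A y - b) - r k‖ ^ 2
        = ‖A y - b‖ ^ 2 - 2 * ⟪A y - b, r k⟫ + ‖r k‖ ^ 2 := norm_sub_sq_real _ _
    have h5 : ⟪r k, r k⟫ = ‖r k‖ ^ 2 := real_inner_self_eq_norm_sq _
    have h6 : ⟪r k, A y - b⟫ = ⟪A y - b, r k⟫ := real_inner_comm _ _
    rw [hL, hL]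
    have hrk : A (x (k + 1)) - b = r k := rfl
    rw [hrk]
    nlinarith [h1, h3, h4, h5, h6, hβ]
  -- affine dependence of L on lam
  have haff : ∀ (y : EuclideanSpace ℝ (Fin n)) (μ ν : EuclideanSpace ℝ (Fin m)),
      L y μ = L y ν + ⟪μ - ν, A y - b⟫ := by
    intro y μ ν
    rw [hL, hL, inner_sub_left]; ring
  -- L(x^{k+1}, lam k) ≤ d(lam k) + η k
  have hupper : ∀ k, 1 ≤ k → L (x (k + 1)) (lam k) ≤ d (lam k) + η k := by
    intro k hk
    obtain ⟨xm, hxm⟩ := (hd (lam k)).1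
    have hkey := key k hk xm
    have hxm' : L xm (lam k) = d (lam k) := hxm
    have hpos : (0:ℝ) ≤ β / 2 * ‖(A xm - b) - r k‖ ^ 2 := by positivity
    linarith [hkey, hxm'.le, hxm'.ge, hpos]
  -- dual ascent
  have hascent : ∀ k, 1 ≤ k →
      d (lam k) + β / 2 * ‖r k‖ ^ 2 - η k ≤ d (lam (k + 1)) := by
    intro k hk
    obtain ⟨xb, hxb⟩ := (hd (lam (k + 1))).1
    have e1 : L xb (lam (k + 1)) = L xb (lam k) + β * ⟪r k, A xb - b⟫ := by
      have := haff xb (lam (k + 1)) (lam k)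
      rw [hlam k hk] at this ⊢
      rw [this]
      have : lam k + β • r k - lam k = β • r k := by abel
      rw [this, real_inner_smul_left]
    have e2 := key k hk xb
    have e3 : d (lam k) ≤ L (x (k + 1)) (lam k) := dle _ _
    have e4 : ‖(A xb - b) - r k‖ ^ 2
        = ‖A xb - b‖ ^ 2 - 2 * ⟪A xb - b, r k⟫ + ‖r k‖ ^ 2 := norm_sub_sq_real _ _
    have e5 : ⟪r k, A xb - b⟫ = ⟪A xb - b, r k⟫ := real_inner_comm _ _
    have e6 : (0:ℝ) ≤ β * ‖A xb - b‖ ^ 2 := by positivity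
    rw [← hxb]
    nlinarith [e1, e2, e3, e4, e5, e6]
  -- gap bound via lamstar
  have hgap : ∀ k, 1 ≤ k → d lamstar - d (lam k) ≤ η k + ⟪lamstar - lam k, r k⟫ := by
    intro k hk
    have h1 : d lamstar ≤ L (x (k + 1)) lamstar := dle _ _
    have h2 : L (x (k + 1)) lamstar = L (x (k + 1)) (lam k) + ⟪lamstar - lam k, r k⟫ :=
      haff _ _ _
    have h3 := hupper k hk
    linarith [h1, h2.le, h2.ge, h3]
  -- the key recursion
  have hrec : ∀ k, 1 ≤ k →
      ‖lam (k + 1) - lamstar‖ ^ 2 + 2 * β * (d lamstar - d (lam (k + 1)))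
        ≤ ‖lam k - lamstar‖ ^ 2 + 4 * β * η k := by
    intro k hk
    have e1 : lam (k + 1) - lamstar = (lam k - lamstar) + β • r k := by
      rw [hlam k hk]; abel
    have e2 : ‖lam (k + 1) - lamstar‖ ^ 2
        = ‖lam k - lamstar‖ ^ 2 + 2 * (β * ⟪lam k - lamstar, r k⟫)
          + β ^ 2 * ‖r k‖ ^ 2 := by
      rw [e1, norm_add_sq_real, real_inner_smul_right, norm_smul]
      simp [abs_of_pos hβ, mul_pow]
    have e3 : ⟪lam k - lamstar, r k⟫ = -⟪lamstar - lam k, r k⟫ := by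
      rw [← inner_neg_left]; congr 1; abel
    have e4 := hgap k hk
    have e5 := hascent k hk
    have e6 : d lamstar - d (lam (k + 1))
        ≤ (d lamstar - d (lam k)) - β / 2 * ‖r k‖ ^ 2 + η k := by linarith
    have e7 : β ^ 2 * ‖r k‖ ^ 2 ≤ 2 * β * ((d lamstar - d (lam k))
        - (d lamstar - d (lam (k + 1))) + η k) := by nlinarith [e6, hβ]
    nlinarith [e2, e3, e4, e7, hβ]
  -- summability of δ
  have hηs : ∀ i : ℕ, 0 ≤ η (i + 1) := fun i => hη _ (Nat.le_add_left 1 i)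
  set T := ∑' k : ℕ, η (k + 1) with hT
  have hpart : ∀ N : ℕ, ∑ i ∈ Finset.range N, η (i + 1) ≤ T :=
    fun N => Summable.sum_le_tsum _ (fun i _ => hηs i) hsum
  have htel : ∀ N : ℕ, ‖lam (N + 1) - lamstar‖ ^ 2
      + 2 * β * ∑ i ∈ Finset.range N, (d lamstar - d (lam (i + 2)))
      ≤ ‖lam 1 - lamstar‖ ^ 2 + 4 * β * ∑ i ∈ Finset.range N, η (i + 1) := by
    intro N
    induction N with
    | zero => simp
    | succ N ih =>
      have := hrec (N + 1) (Nat.le_add_left 1 N)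
      rw [Finset.sum_range_succ, Finset.sum_range_succ]
      have hmul : 2 * β * (∑ i ∈ Finset.range N, (d lamstar - d (lam (i + 2)))
            + (d lamstar - d (lam (N + 2))))
          = 2 * β * ∑ i ∈ Finset.range N, (d lamstar - d (lam (i + 2)))
            + 2 * β * (d lamstar - d (lam (N + 2))) := by ring
      have hmul2 : 4 * β * (∑ i ∈ Finset.range N, η (i + 1) + η (N + 1))
          = 4 * β * ∑ i ∈ Finset.range N, η (i + 1) + 4 * β * η (N + 1) := by ring
      rw [hmul, hmul2]
      linarith [ih, this]
  have hδsum : Summable fun i : ℕ => d lamstar - d (lam (i + 2)) := by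
    apply summable_of_sum_range_le
      (c := (‖lam 1 - lamstar‖ ^ 2 + 4 * β * T) / (2 * β)) (fun i => hδ0 (i + 2))
    intro N
    have h1 := htel N
    have h2 := hpart N
    have h3 : (0:ℝ) ≤ ‖lam (N + 1) - lamstar‖ ^ 2 := sq_nonneg _
    have hb2 : (0:ℝ) < 2 * β := by linarith
    rw [le_div_iff₀ hb2]
    have h4 := mul_le_mul_of_nonneg_left h2 (by linarith : (0:ℝ) ≤ 4 * β)
    nlinarith [h1, h3, h4]
  have hδ2 : Tendsto (fun i => d lamstar - d (lam (i + 2))) atTop (nhds 0) :=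
    hδsum.tendsto_atTop_zero
  have hδtend : Tendsto (fun k => d lamstar - d (lam k)) atTop (nhds 0) :=
    (tendsto_add_atTop_iff_nat 2).mp hδ2
  refine ⟨hδtend, ?_⟩
  -- residual convergence
  have hηtend : Tendsto (fun k => η (k + 1)) atTop (nhds 0) := hsum.tendsto_atTop_zero
  have hδ1 : Tendsto (fun i => d lamstar - d (lam (i + 1))) atTop (nhds 0) :=
    (tendsto_add_atTop_iff_nat 1).mpr hδtend
  have hRHS : Tendsto (fun k => (d lamstar - d (lam (k + 1)))
      - (d lamstar - d (lam (k + 2))) + η (k + 1)) atTop (nhds 0) := by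
    have := (hδ1.sub hδ2).add hηtend
    simpa using this
  have hsq : Tendsto (fun k => ‖r (k + 1)‖ ^ 2) atTop (nhds 0) := by
    apply squeeze_zero (fun k => sq_nonneg _)
      (g := fun k => (2 / β) * ((d lamstar - d (lam (k + 1)))
        - (d lamstar - d (lam (k + 2))) + η (k + 1)))
    · intro k
      have h1 := hascent (k + 1) (Nat.le_add_left 1 k)
      have h2 : (d lamstar - d (lam (k + 2))) ≤ (d lamstar - d (lam (k + 1)))
          - β / 2 * ‖r (k + 1)‖ ^ 2 + η (k + 1) := by linarith
      have hb : (0:ℝ) < 2 / β := by positivity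
      have h4 : (2 / β) * (β / 2 * ‖r (k + 1)‖ ^ 2) = ‖r (k + 1)‖ ^ 2 := by
        field_simp
      have h5 := mul_le_mul_of_nonneg_left
        (show β / 2 * ‖r (k + 1)‖ ^ 2 ≤ (d lamstar - d (lam (k + 1)))
          - (d lamstar - d (lam (k + 2))) + η (k + 1) by linarith) hb.le
      linarith
    · have := hRHS.const_mul (2 / β)
      simpa using this
  have hnorm1 : Tendsto (fun k => ‖r (k + 1)‖) atTop (nhds 0) := by
    have hcont := (Real.continuous_sqrt.tendsto 0).comp hsq
    have heq : (fun k => Real.sqrt (‖r (k + 1)‖ ^ 2)) = fun k => ‖r (k + 1)‖ := by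
      funext k; exact Real.sqrt_sq (norm_nonneg _)
    rw [Function.comp_def, heq] at hcont
    simpa using hcont
  exact (tendsto_add_atTop_iff_nat 1).mp hnorm1
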